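/- arXiv:1710.04180 — 3 statements merged into one kernel-verified Lean document; each statement's English description precedes it below -/
import Mathlib

section
/- Let M ∈ SL(3,ℝ) have Plücker coordinates (A1', B1', C1', A2', B2', C2'), and let n = n(x,y,z) be the upper triangular unipotent matrix with first superdiagonal entries x, y and corner entry z. Then the matrix n·M·n⁻¹ has Plücker coordinates (A1', B1' - A1'·x, C1' - B1'·y + A1'·(xy - z), A2', B2' + A2'·y, C2' + B2'·x + A2'·z). -/
/-- Plücker coordinates of a 3×3 matrix. -/
def pA1 {R : Type*} [CommRing R] (M : Matrix (Fin 3) (Fin 3) R) : R := -M 2 0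
def pB1 {R : Type*} [CommRing R] (M : Matrix (Fin 3) (Fin 3) R) : R := -M 2 1
def pC1 {R : Type*} [CommRing R] (M : Matrix (Fin 3) (Fin 3) R) : R := -M 2 2
def pA2 {R : Type*} [CommRing R] (M : Matrix (Fin 3) (Fin 3) R) : R :=
  -(M 1 0 * M 2 1 - M 1 1 * M 2 0)
def pB2 {R : Type*} [CommRing R] (M : Matrix (Fin 3) (Fin 3) R) : R :=
  M 1 0 * M 2 2 - M 1 2 * M 2 0
def pC2 {R : Type*} [CommRing R] (M : Matrix (Fin 3) (Fin 3) R) : R :=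
  -(M 1 1 * M 2 2 - M 1 2 * M 2 1)


theorem stmt3 (x y z : ℝ) (M n N : Matrix (Fin 3) (Fin 3) ℝ)
    (hdet : M.det = 1)
    (hn : n = !![1, x, z; 0, 1, y; 0, 0, 1])
    (hN : N = n * M * n⁻¹) :
    pA1 N = pA1 M ∧
    pB1 N = pB1 M - pA1 M * x ∧
    pC1 N = pC1 M - pB1 M * y + pA1 M * (x * y - z) ∧
    pA2 N = pA2 M ∧
    pB2 N = pB2 M + pA2 M * y ∧
    pC2 N = pC2 M + pB2 M * x + pA2 M * z := by
  have hinv : n⁻¹ = !![1, -x, x*y - z; 0, 1, -y; 0, 0, 1] := by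
    apply Matrix.inv_eq_right_inv
    subst hn
    ext i j
    fin_cases i <;> fin_cases j <;>
      simp [Matrix.mul_apply, Fin.sum_univ_succ] <;> ring
  subst hn hN
  rw [hinv, Matrix.eta_fin_three M, Matrix.mul_fin_three, Matrix.mul_fin_three]
  simp only [pA1, pB1, pC1, pA2, pB2, pC2, Matrix.of_apply, Matrix.cons_val', Matrix.cons_val_zero,
    Matrix.cons_val_one, Matrix.head_cons, Matrix.empty_val', Matrix.cons_val_fin_one,
    Matrix.head_fin_const, Matrix.cons_val_two, Matrix.tail_cons]
  refine ⟨by ring, by ring, by ring, by ring, by ring, by ring⟩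
end

section
/- Let M ∈ Γ₁(4) ⊂ SL(3,ℤ) have Plücker coordinates (4A1, 4B1, C1, 4A2, 4B2, C2) with A1, B1, C1, A2, B2, C2 integers. Suppose D is a positive integer dividing gcd(A1, A2), let D1 = gcd(D, B1) and D2 = D/D1, and suppose D2 divides B2. Then for T = diag(1, D2⁻¹, D⁻¹) (a diagonal matrix over ℚ), the matrix T·M·T⁻¹ has all integer entries, lies in SL(3,ℤ), and has Plücker coordinates (4A1/D, 4B1/D1, C1, 4A2/D, 4B2/D2, C2). -/
theorem stmt7 (M : Matrix (Fin 3) (Fin 3) ℤ) (hdet : M.det = 1)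
    (hΓ : M 0 0 ≡ 1 [ZMOD 4] ∧ M 1 1 ≡ 1 [ZMOD 4] ∧ M 2 2 ≡ 1 [ZMOD 4] ∧
      M 1 0 ≡ 0 [ZMOD 4] ∧ M 2 0 ≡ 0 [ZMOD 4] ∧ M 2 1 ≡ 0 [ZMOD 4])
    (A1 B1 C1 A2 B2 C2 D D1 D2 : ℤ)
    (hp : pA1 M = 4 * A1 ∧ pB1 M = 4 * B1 ∧ pC1 M = C1 ∧
      pA2 M = 4 * A2 ∧ pB2 M = 4 * B2 ∧ pC2 M = C2)
    (hD : 0 < D) (hDdvd : D ∣ (Int.gcd A1 A2 : ℤ))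
    (hD1 : D1 = (Int.gcd D B1 : ℤ)) (hD2 : D2 = D / D1) (hD2B2 : D2 ∣ B2)
    (T : Matrix (Fin 3) (Fin 3) ℚ)
    (hT : T = !![1, 0, 0; 0, (D2 : ℚ)⁻¹, 0; 0, 0, (D : ℚ)⁻¹]) :
    ∃ N : Matrix (Fin 3) (Fin 3) ℤ,
      N.map (Int.cast : ℤ → ℚ) = T * M.map (Int.cast : ℤ → ℚ) * T⁻¹ ∧
      N.det = 1 ∧
      pA1 N = 4 * (A1 / D) ∧ pB1 N = 4 * (B1 / D1) ∧ pC1 N = C1 ∧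
      pA2 N = 4 * (A2 / D) ∧ pB2 N = 4 * (B2 / D2) ∧ pC2 N = C2 := by
  obtain ⟨hpA1, hpB1, hpC1, hpA2, hpB2, hpC2⟩ := hp
  simp only [pA1] at hpA1
  simp only [pB1] at hpB1
  simp only [pC1] at hpC1
  simp only [pA2] at hpA2
  simp only [pB2] at hpB2
  simp only [pC2] at hpC2
  -- basic divisibilities
  have hDA1 : D ∣ A1 := hDdvd.trans (Int.gcd_dvd_left _ _)
  have hDA2 : D ∣ A2 := hDdvd.trans (Int.gcd_dvd_right _ _)
  have hD1B1 : D1 ∣ B1 := hD1 ▸ Int.gcd_dvd_right _ _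
  have hD1D : D1 ∣ D := hD1 ▸ Int.gcd_dvd_left _ _
  have hD1pos : 0 < D1 := by
    rcases hD1D with ⟨k, hk⟩
    rcases lt_trichotomy D1 0 with h | h | h
    · nlinarith [hD, hk]
    · simp [h] at hk; omega
    · exact h
  have hDD : D = D1 * D2 := by
    rw [hD2]
    exact (Int.mul_ediv_cancel' hD1D).symm
  have hD2pos : 0 < D2 := by nlinarith
  have hD2D : D2 ∣ D := ⟨D1, by linarith [hDD]⟩
  -- matrix entries from Plücker hypotheses
  have hM20 : M 2 0 = -(4 * A1) := by linarith
  have hM21 : M 2 1 = -(4 * B1) := by linarith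
  have hM22 : M 2 2 = -C1 := by linarith
  -- D2 divides M 1 0
  have hdet3 : M 0 0 * M 1 1 * M 2 2 - M 0 0 * M 1 2 * M 2 1 - M 0 1 * M 1 0 * M 2 2 +
      M 0 1 * M 1 2 * M 2 0 + M 0 2 * M 1 0 * M 2 1 - M 0 2 * M 1 1 * M 2 0 = 1 := by
    rw [← Matrix.det_fin_three]; exact hdet
  have hD2A1 : D2 ∣ A1 := hD2D.trans hDA1
  have hD2A2 : D2 ∣ A2 := hD2D.trans hDA2
  have hD2M20 : D2 ∣ M 2 0 := by
    rw [hM20]; exact dvd_neg.mpr (hD2A1.mul_left 4)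
  have hd1 : D2 ∣ M 1 0 * M 2 0 := hD2M20.mul_left _
  have hd2 : D2 ∣ M 1 0 * M 2 1 := by
    have heq : M 1 0 * M 2 1 = M 1 1 * M 2 0 - 4 * A2 := by linarith
    rw [heq]
    exact dvd_sub (hD2M20.mul_left _) (hD2A2.mul_left 4)
  have hd3 : D2 ∣ M 1 0 * M 2 2 := by
    have heq : M 1 0 * M 2 2 = 4 * B2 + M 1 2 * M 2 0 := by linarith
    rw [heq]
    exact dvd_add (hD2B2.mul_left 4) (hD2M20.mul_left _)
  have hD2d : D2 ∣ M 1 0 := by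
    have key : M 1 0 = (M 1 0 * M 2 0) * (M 0 1 * M 1 2 - M 0 2 * M 1 1) +
        (M 1 0 * M 2 1) * (M 0 2 * M 1 0 - M 0 0 * M 1 2) +
        (M 1 0 * M 2 2) * (M 0 0 * M 1 1 - M 0 1 * M 1 0) := by
      linear_combination (-(M 1 0)) * hdet3
    rw [key]
    exact dvd_add (dvd_add (hd1.mul_right _) (hd2.mul_right _)) (hd3.mul_right _)
  -- witnesses
  obtain ⟨a1, ha1⟩ := hDA1
  obtain ⟨a2, ha2⟩ := hDA2
  obtain ⟨b1, hb1⟩ := hD1B1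
  obtain ⟨b2, hb2⟩ := hD2B2
  obtain ⟨d', hd'⟩ := hD2d
  have hDne : (D : ℚ) ≠ 0 := Int.cast_ne_zero.mpr hD.ne'
  have hD1ne : (D1 : ℚ) ≠ 0 := Int.cast_ne_zero.mpr hD1pos.ne'
  have hD2ne : (D2 : ℚ) ≠ 0 := Int.cast_ne_zero.mpr hD2pos.ne'
  set N : Matrix (Fin 3) (Fin 3) ℤ :=
    !![M 0 0, M 0 1 * D2, M 0 2 * D; d', M 1 1, M 1 2 * D1; -(4 * a1), -(4 * b1), M 2 2]
    with hN
  have hS : T⁻¹ = !![1, 0, 0; 0, (D2 : ℚ), 0; 0, 0, (D : ℚ)] := by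
    apply Matrix.inv_eq_right_inv
    rw [hT, Matrix.mul_fin_three, Matrix.one_fin_three]
    congr 1 <;> norm_num <;> field_simp <;> trivial
  have hMq : M.map (Int.cast : ℤ → ℚ) =
      !![(M 0 0 : ℚ), (M 0 1 : ℚ), (M 0 2 : ℚ); (M 1 0 : ℚ), (M 1 1 : ℚ), (M 1 2 : ℚ);
         (M 2 0 : ℚ), (M 2 1 : ℚ), (M 2 2 : ℚ)] := by
    ext i j
    fin_cases i <;> fin_cases j <;> simp [Matrix.map_apply]
  have hNq : N.map (Int.cast : ℤ → ℚ) =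
      !![(M 0 0 : ℚ), (M 0 1 : ℚ) * D2, (M 0 2 : ℚ) * D; (d' : ℚ), (M 1 1 : ℚ), (M 1 2 : ℚ) * D1;
         -(4 * (a1 : ℚ)), -(4 * (b1 : ℚ)), (M 2 2 : ℚ)] := by
    ext i j
    fin_cases i <;> fin_cases j <;> simp [hN, Matrix.map_apply] <;> push_cast <;> first | ring | exact Or.inl trivial
  have hmap : N.map (Int.cast : ℤ → ℚ) = T * M.map (Int.cast : ℤ → ℚ) * T⁻¹ := by
    rw [hS, hT, hMq, hNq, Matrix.mul_fin_three, Matrix.mul_fin_three]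
    have e10 : (M 1 0 : ℚ) = D2 * d' := by exact_mod_cast congrArg (Int.cast : ℤ → ℚ) hd'
    have e20 : (M 2 0 : ℚ) = -(4 * (D * a1)) := by
      rw [hM20, ha1]; push_cast; ring
    have e21 : (M 2 1 : ℚ) = -(4 * (D1 * b1)) := by
      rw [hM21, hb1]; push_cast; ring
    have eD : (D : ℚ) = D1 * D2 := by exact_mod_cast congrArg (Int.cast : ℤ → ℚ) hDD
    rw [e10, e20, e21, eD]
    ext i j
    fin_cases i <;> fin_cases j <;> (simp; try field_simp [hDne, hD1ne, hD2ne]; try ring; try tauto)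
  have hdetN : N.det = 1 := by
    have hcast : ∀ P : Matrix (Fin 3) (Fin 3) ℤ,
        (P.map (Int.cast : ℤ → ℚ)).det = ((P.det : ℤ) : ℚ) := by
      intro P
      rw [Matrix.det_fin_three, Matrix.det_fin_three]
      simp only [Matrix.map_apply]
      push_cast
      ring
    have hdT : (!![1, 0, 0; 0, (D2 : ℚ)⁻¹, 0; 0, 0, (D : ℚ)⁻¹] : Matrix (Fin 3) (Fin 3) ℚ).det
        = (D2 : ℚ)⁻¹ * (D : ℚ)⁻¹ := by
      rw [Matrix.det_fin_three]; simp [Matrix.cons_val]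
    have hdS : (!![1, 0, 0; 0, (D2 : ℚ), 0; 0, 0, (D : ℚ)] : Matrix (Fin 3) (Fin 3) ℚ).det
        = (D2 : ℚ) * (D : ℚ) := by
      rw [Matrix.det_fin_three]; simp [Matrix.cons_val]
    have h1 : ((N.det : ℤ) : ℚ) = 1 := by
      rw [← hcast N, hmap, hS, hT, Matrix.det_mul, Matrix.det_mul, hcast M, hdet, hdT, hdS]
      push_cast
      field_simp
    exact_mod_cast h1
  -- substituted Plücker hypotheses
  rw [hd', hM21, hM20, ha1, ha2, hb1, hDD] at hpA2
  rw [hd', hM20, ha1, hb2, hDD] at hpB2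
  rw [hM21, hb1] at hpC2
  rw [ha1, ha2, hb1, hb2, hDD]
  refine ⟨N, hmap, hdetN, ?_, ?_, ?_, ?_, ?_, ?_⟩
  · rw [Int.mul_ediv_cancel_left a1 (by positivity : D1 * D2 ≠ 0)]
    simp [pA1, hN]
  · rw [Int.mul_ediv_cancel_left b1 hD1pos.ne']
    simp [pB1, hN]
  · simp [pC1, hN, hM22]
  · rw [Int.mul_ediv_cancel_left a2 (by positivity : D1 * D2 ≠ 0)]
    have ent : pA2 N = -(d' * (-(4 * b1)) - M 1 1 * (-(4 * a1))) := by
      simp [pA2, hN]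
    rw [ent]
    have key : (4 * (D1 * D2)) * (-(d' * (-(4 * b1)) - M 1 1 * (-(4 * a1))))
        = (4 * (D1 * D2)) * (4 * a2) := by
      linear_combination (4 : ℤ) * hpA2
    exact mul_left_cancel₀ (by positivity) key
  · rw [Int.mul_ediv_cancel_left b2 hD2pos.ne']
    have ent : pB2 N = d' * M 2 2 - (M 1 2 * D1) * (-(4 * a1)) := by
      simp [pB2, hN]
    rw [ent]
    have key : D2 * (d' * M 2 2 - (M 1 2 * D1) * (-(4 * a1))) = D2 * (4 * b2) := by
      linear_combination hpB2
    exact mul_left_cancel₀ hD2pos.ne' key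
  · have ent : pC2 N = -(M 1 1 * M 2 2 - (M 1 2 * D1) * (-(4 * b1))) := by
      simp [pC2, hN]
    rw [ent]
    linear_combination hpC2
end

section
/- Let n be a nonzero integer and a an integer with gcd(a, n) = 1 and a, n odd. Then the Kronecker symbols satisfy (a/n)·(n/a) = H(a,n)·(−1)^(((a−1)/2)·((n−1)/2)), where H(a,n) = −1 if both a < 0 and n < 0, and H(a,n) = 1 otherwise. -/
/-- The Kronecker symbol `(a/2)`: `0` if `a` is even, `1` if `a ≡ ±1 (mod 8)`,
`-1` if `a ≡ ±3 (mod 8)`. -/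
def kronTwo (a : ℤ) : ℤ :=
  if a % 2 = 0 then 0 else if a % 8 = 1 ∨ a % 8 = 7 then 1 else -1

/-- The odd part of a natural number. -/
def oddPart (n : ℕ) : ℕ := n / 2 ^ (n.factorization 2)

/-- The Kronecker symbol `(a/n)` for integers `a`, `n`, extended to all of `ℤ` in the
denominator: multiplicative in `n`, with `(a / minus one)` the sign character,
`(a/2) = kronTwo a`, `(a/0) = 1` iff `a = ±1`, and agreeing with the Jacobi symbol on
positive odd denominators. -/
def kron (a n : ℤ) : ℤ :=
  if n = 0 then (if a = 1 ∨ a = -1 then 1 else 0)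
  else (if n < 0 ∧ a < 0 then -1 else 1) * kronTwo a ^ (n.natAbs.factorization 2) *
    jacobiSym a (oddPart n.natAbs)

private lemma negpow_congr {m k : ℕ} (h : m % 2 = k % 2) : ((-1:ℤ))^m = (-1)^k := by
  conv_lhs => rw [← Nat.div_add_mod m 2]
  conv_rhs => rw [← Nat.div_add_mod k 2]
  rw [h, pow_add, pow_add, pow_mul, pow_mul]
  norm_num

private lemma kron_odd (x y : ℤ) (hy : y ≠ 0) (hyo : Odd y) :
    kron x y = (if y < 0 ∧ x < 0 then -1 else 1) * jacobiSym x y.natAbs := by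
  have hyo' : y % 2 = 1 := Int.odd_iff.mp hyo
  have h2 : ¬ (2:ℕ) ∣ y.natAbs := by omega
  have hf : y.natAbs.factorization 2 = 0 := Nat.factorization_eq_zero_of_not_dvd h2
  simp [kron, hy, oddPart, hf]

theorem stmt19 (a n : ℤ) (hn : n ≠ 0) (hcop : Int.gcd a n = 1)
    (ha : Odd a) (hnodd : Odd n) :
    kron a n * kron n a =
      (if a < 0 ∧ n < 0 then -1 else 1) *
        (-1) ^ ((((a - 1) / 2) * ((n - 1) / 2)).natAbs) := by
  have ha2 : a % 2 = 1 := Int.odd_iff.mp ha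
  have hn2 : n % 2 = 1 := Int.odd_iff.mp hnodd
  have haz : a ≠ 0 := by omega
  set A := a.natAbs with hAdef
  set N := n.natAbs with hNdef
  have hA2 : A % 2 = 1 := by omega
  have hN2 : N % 2 = 1 := by omega
  have hAodd : Odd A := Nat.odd_iff.mpr hA2
  have hNodd : Odd N := Nat.odd_iff.mpr hN2
  have hc : Nat.gcd N A = 1 := by
    have : Nat.gcd A N = 1 := by simpa [Int.gcd] using hcop
    rwa [Nat.gcd_comm] at this
  have hsq : jacobiSym (N : ℤ) A ^ 2 = 1 := by
    apply jacobiSym.sq_one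
    simpa [Int.gcd] using hc
  have hqr := jacobiSym.quadratic_reciprocity hAodd hNodd
  rw [kron_odd a n hn hnodd, kron_odd n a haz ha]
  rw [Int.natAbs_mul]
  rcases lt_or_gt_of_ne haz with ha0 | ha0 <;> rcases lt_or_gt_of_ne hn with hn0 | hn0
  · -- a < 0, n < 0
    have haA : a = -(A : ℤ) := by omega
    have hnN : n = -(N : ℤ) := by omega
    have e1 : ((a - 1) / 2).natAbs = A / 2 + 1 := by omega
    have e2 : ((n - 1) / 2).natAbs = N / 2 + 1 := by omega
    rw [if_pos ⟨hn0, ha0⟩, if_pos ⟨ha0, hn0⟩, e1, e2]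
    rw [haA, hnN]
    simp only [Int.natAbs_neg, Int.natAbs_natCast]
    rw [jacobiSym.neg _ hNodd, jacobiSym.neg _ hAodd,
      ZMod.χ₄_eq_neg_one_pow hN2, ZMod.χ₄_eq_neg_one_pow hA2, hqr]
    have : (-1 : ℤ) * ((-1) ^ (N / 2) * ((-1) ^ (A / 2 * (N / 2)) *
        jacobiSym (N : ℤ) A)) * (-1 * ((-1) ^ (A / 2) * jacobiSym (N : ℤ) A)) =
        (-1) ^ (N / 2 + A / 2 * (N / 2) + A / 2) *
        (jacobiSym (N : ℤ) A ^ 2) := by ring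
    rw [this, hsq, mul_one, ← pow_succ' (-1 : ℤ)]
    apply negpow_congr
    have h : ((A / 2 + 1) * (N / 2 + 1)) + 1 =
        A / 2 * (N / 2) + A / 2 + N / 2 + 2 := by ring
    omega
  · -- a < 0, n > 0
    have haA : a = -(A : ℤ) := by omega
    have hnN : n = (N : ℤ) := by omega
    have e1 : ((a - 1) / 2).natAbs = A / 2 + 1 := by omega
    have e2 : ((n - 1) / 2).natAbs = N / 2 := by omega
    rw [if_neg (by omega), if_neg (by omega), e1, e2, one_mul, one_mul,
      one_mul]
    rw [haA, hnN]
    simp only [Int.natAbs_neg, Int.natAbs_natCast]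
    rw [jacobiSym.neg _ hNodd, ZMod.χ₄_eq_neg_one_pow hN2, hqr]
    have : (-1 : ℤ) ^ (N / 2) * ((-1) ^ (A / 2 * (N / 2)) * jacobiSym (N : ℤ) A) *
        jacobiSym (N : ℤ) A = (-1) ^ (N / 2 + A / 2 * (N / 2)) *
        (jacobiSym (N : ℤ) A ^ 2) := by ring
    rw [this, hsq, mul_one]
    apply negpow_congr
    have h : (A / 2 + 1) * (N / 2) = N / 2 + A / 2 * (N / 2) := by ring
    omega
  · -- a > 0, n < 0
    have haA : a = (A : ℤ) := by omega
    have hnN : n = -(N : ℤ) := by omega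
    have e1 : ((a - 1) / 2).natAbs = A / 2 := by omega
    have e2 : ((n - 1) / 2).natAbs = N / 2 + 1 := by omega
    rw [if_neg (by omega), if_neg (by omega), e1, e2, one_mul, one_mul,
      one_mul]
    rw [haA, hnN]
    simp only [Int.natAbs_neg, Int.natAbs_natCast]
    rw [jacobiSym.neg _ hAodd, ZMod.χ₄_eq_neg_one_pow hA2, hqr]
    have : (-1 : ℤ) ^ (A / 2 * (N / 2)) * jacobiSym (N : ℤ) A *
        ((-1) ^ (A / 2) * jacobiSym (N : ℤ) A) = (-1) ^ (A / 2 * (N / 2) + A / 2) *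
        (jacobiSym (N : ℤ) A ^ 2) := by ring
    rw [this, hsq, mul_one]
    apply negpow_congr
    have h : A / 2 * (N / 2 + 1) = A / 2 * (N / 2) + A / 2 := by ring
    omega
  · -- a > 0, n > 0
    have haA : a = (A : ℤ) := by omega
    have hnN : n = (N : ℤ) := by omega
    have e1 : ((a - 1) / 2).natAbs = A / 2 := by omega
    have e2 : ((n - 1) / 2).natAbs = N / 2 := by omega
    rw [if_neg (by omega), if_neg (by omega), e1, e2, one_mul, one_mul,
      one_mul]
    rw [haA, hnN]
    simp only [Int.natAbs_natCast]
    rw [hqr]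
    have : (-1 : ℤ) ^ (A / 2 * (N / 2)) * jacobiSym (N : ℤ) A * jacobiSym (N : ℤ) A =
        (-1) ^ (A / 2 * (N / 2)) * (jacobiSym (N : ℤ) A ^ 2) := by ring
    rw [this, hsq, mul_one]
end
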